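/- For any unitary matrix U on ℂ^d, the discrete Wigner propagator admits the operational form G_W((m',n'),(m,n)) = (1/d) · Tr( A(m',n') · U · A(m,n) · U† ), where A(m,n) = (1/d) Σ_{k,j ∈ ZMod d} ω^{km−jn} D(k,j)† are the phase-point operators. -/

import Mathlib

open Matrix Complex

noncomputable section

/-- `ω = exp(2πi/d)`, a primitive `d`-th root of unity. -/
def omega (d : ℕ) : ℂ := Complex.exp (2 * Real.pi * Complex.I / d)

/-- Powers of `ω` with exponent valued in `ZMod d`, evaluated via the canonical
integer representative (well-defined since `ω ^ d = 1`). -/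
def wpow (d : ℕ) (x : ZMod d) : ℂ := omega d ^ x.val

/-- The clock matrix `Z`, acting as `Z e_n = ω^n e_n`. -/
def clockZ (d : ℕ) : Matrix (ZMod d) (ZMod d) ℂ :=
  Matrix.diagonal (fun n => wpow d n)

/-- The shift matrix `X`, acting as `X e_n = e_{n+1}`. -/
def shiftX (d : ℕ) : Matrix (ZMod d) (ZMod d) ℂ :=
  Matrix.of (fun i j => if i = j + 1 then 1 else 0)

/-- The displacement operator `D(k,j) = ω^{-2⁻¹ k j} Z^k X^j`. -/
def Dop (d : ℕ) [NeZero d] (k j : ZMod d) : Matrix (ZMod d) (ZMod d) ℂ :=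
  wpow d (-(2⁻¹ * k * j)) • (clockZ d ^ k.val * shiftX d ^ j.val)

/-- The Weyl symbol of a matrix `A`: `Ã(k,j) = Tr(A · D(k,j))`. -/
def weylSymbol (d : ℕ) [NeZero d] (A : Matrix (ZMod d) (ZMod d) ℂ) (k j : ZMod d) : ℂ :=
  Matrix.trace (A * Dop d k j)

/-- The phase-space symbol of `B`:
`B_W(m,n) = (1/d) Σ_{k,j} Tr(B·D(k,j)) ω^{jn−km}`. -/
def psSymbol (d : ℕ) [NeZero d] (B : Matrix (ZMod d) (ZMod d) ℂ) (m n : ZMod d) : ℂ :=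
  (1 / (d : ℂ)) * ∑ k : ZMod d, ∑ j : ZMod d,
    weylSymbol d B k j * wpow d (j * n - k * m)

/-- The discrete Wigner propagator of a unitary `U`:
`G_W((m',n'),(m,n)) = (1/d²) Σ_{m̃,ñ} ω^{−2[m̃(n'−n) − ñ(m'−m)]}
  U_W(m+m̃, n+ñ) · conj(U_W(m'−m̃, n'−ñ))`. -/
def propG (d : ℕ) [NeZero d] (U : Matrix (ZMod d) (ZMod d) ℂ)
    (μ' μ : ZMod d × ZMod d) : ℂ :=
  (1 / (d : ℂ) ^ 2) * ∑ mt : ZMod d, ∑ nt : ZMod d,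
    wpow d (-(2 * (mt * (μ'.2 - μ.2) - nt * (μ'.1 - μ.1)))) *
      psSymbol d U (μ.1 + mt) (μ.2 + nt) *
      (starRingEnd ℂ) (psSymbol d U (μ'.1 - mt) (μ'.2 - nt))

/-- The phase-point operators `A(m,n) = (1/d) Σ_{k,j} ω^{km−jn} D(k,j)†`. -/
def phasePoint (d : ℕ) [NeZero d] (m n : ZMod d) : Matrix (ZMod d) (ZMod d) ℂ :=
  (1 / (d : ℂ)) • ∑ k : ZMod d, ∑ j : ZMod d, wpow d (k * m - j * n) • (Dop d k j)ᴴ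



section aux
set_option linter.unusedSectionVars false
set_option maxHeartbeats 1000000
variable {d : ℕ} [NeZero d]

lemma omega_prim : IsPrimitiveRoot (omega d) d :=
  Complex.isPrimitiveRoot_exp d (NeZero.ne d)

lemma val_cast (a : ZMod d) : ((a.val : ℕ) : ZMod d) = a := ZMod.natCast_rightInverse a

lemma wpow_natCast (n : ℕ) : wpow d (n : ZMod d) = omega d ^ n := by
  rw [wpow, ZMod.val_natCast]
  conv_rhs => rw [← Nat.mod_add_div n d, pow_add, pow_mul, omega_prim.pow_eq_one, one_pow, mul_one]

lemma wpow_add (x y : ZMod d) : wpow d (x + y) = wpow d x * wpow d y := by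
  have h : ((x.val + y.val : ℕ) : ZMod d) = x + y := by push_cast [val_cast]; ring
  rw [← h, wpow_natCast, pow_add]; rfl

lemma wpow_zero : wpow d 0 = 1 := by simp [wpow]

lemma wpow_ne_zero (x : ZMod d) : wpow d x ≠ 0 := pow_ne_zero _ (Complex.exp_ne_zero _)

lemma wpow_neg (x : ZMod d) : wpow d (-x) = (wpow d x)⁻¹ := by
  have h : wpow d x * wpow d (-x) = 1 := by rw [← wpow_add, add_neg_cancel, wpow_zero]
  exact eq_inv_of_mul_eq_one_right h

lemma wpow_sub (x y : ZMod d) : wpow d (x - y) = wpow d x * (wpow d y)⁻¹ := by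
  rw [sub_eq_add_neg, wpow_add, wpow_neg]

lemma conj_omega : (starRingEnd ℂ) (omega d) = (omega d)⁻¹ := by
  rw [omega, ← Complex.exp_conj, ← Complex.exp_neg]
  congr 1
  simp [map_div₀, Complex.conj_I, map_ofNat]
  ring

lemma conj_wpow (x : ZMod d) : (starRingEnd ℂ) (wpow d x) = wpow d (-x) := by
  rw [wpow_neg, wpow, map_pow, conj_omega, inv_pow]
lemma wpow_pow (t : ℕ) (x : ZMod d) : wpow d x ^ t = wpow d ((t : ZMod d) * x) := by
  have h : (((x.val * t : ℕ)) : ZMod d) = (t : ZMod d) * x := by push_cast [val_cast]; ring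
  rw [← h, wpow_natCast, pow_mul]; rfl

lemma wpow_eq_one_iff (x : ZMod d) : wpow d x = 1 ↔ x = 0 := by
  constructor
  · intro h
    by_contra hx
    have hv : 0 < x.val := Nat.pos_of_ne_zero (fun h0 => hx (by rw [← val_cast x, h0]; simp))
    exact (omega_prim (d := d)).pow_ne_one_of_pos_of_lt hv.ne' (ZMod.val_lt x) h
  · rintro rfl; exact wpow_zero

lemma wpow_sum_eq (c : ZMod d) :
    ∑ k : ZMod d, wpow d (k * c) = if c = 0 then (d : ℂ) else 0 := by
  split_ifs with hc
  · subst hc; simp [wpow_zero, Finset.card_univ]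
  · have key : (∑ k : ZMod d, wpow d (k * c)) * wpow d c = ∑ k : ZMod d, wpow d (k * c) := by
      rw [Finset.sum_mul]
      simp_rw [← wpow_add]
      exact Fintype.sum_equiv (Equiv.addRight 1) _ _ (fun k => by rw [Equiv.coe_addRight]; ring_nf)
    have h1 : wpow d c ≠ 1 := fun h => hc ((wpow_eq_one_iff c).mp h)
    have := mul_eq_zero.mp (by linear_combination key : (∑ k : ZMod d, wpow d (k * c)) * (wpow d c - 1) = 0)
    rcases this with h | h
    · exact h
    · exact absurd (by linear_combination h) h1

lemma shiftX_pow_apply (t : ℕ) (a b : ZMod d) :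
    (shiftX d ^ t) a b = if a = b + (t : ZMod d) then 1 else 0 := by
  induction t generalizing a b with
  | zero => simp [Matrix.one_apply]
  | succ t ih =>
    rw [pow_succ, Matrix.mul_apply]
    simp only [ih, shiftX, Matrix.of_apply, ite_mul, one_mul, zero_mul, mul_ite, mul_one, mul_zero]
    rw [Finset.sum_ite_eq' Finset.univ (b + 1)]
    have h : b + 1 + (t : ZMod d) = b + ((t : ℕ) + 1 : ℕ) := by push_cast; ring
    rw [if_pos (Finset.mem_univ _)]
    exact (ih a (b+1)).trans (by rw [h])

lemma Dop_apply (k j a b : ZMod d) :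
    Dop d k j a b = if a = b + j then wpow d (k * a - 2⁻¹ * k * j) else 0 := by
  rw [Dop, Matrix.smul_apply, Matrix.mul_apply]
  have hz : clockZ d ^ k.val = Matrix.diagonal (fun n => wpow d n ^ k.val) := by
    rw [clockZ, Matrix.diagonal_pow]; rfl
  simp only [hz, Matrix.diagonal_apply, shiftX_pow_apply, val_cast]
  rw [Finset.sum_eq_single a (fun c _ hc => by simp [Ne.symm hc]) (by simp)]
  simp only [if_pos rfl]
  by_cases h : a = b + j
  · rw [if_pos h, if_pos h, smul_eq_mul, if_pos trivial, mul_one, wpow_pow, val_cast, ← wpow_add]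
    congr 1; ring
  · rw [if_neg h, if_neg h, mul_zero, smul_zero]

lemma wpow_congr (x y : ZMod d) (h : x = y) : wpow d x = wpow d y := by rw [h]

lemma phasePoint_apply (h2 : (2 : ZMod d) * 2⁻¹ = 1) (m n a b : ZMod d) :
    phasePoint d m n a b = if a + b = 2 * m then wpow d ((a - b) * n) else 0 := by
  have hd0 : (d : ℂ) ≠ 0 := Nat.cast_ne_zero.mpr (NeZero.ne d)
  rw [phasePoint, Matrix.smul_apply]
  simp only [Matrix.sum_apply, Matrix.smul_apply, Matrix.conjTranspose_apply, Dop_apply,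
    smul_eq_mul, apply_ite (star : ℂ → ℂ), star_zero, Complex.star_def, conj_wpow]
  have hcond : ∀ j : ZMod d, (b = a + j) = (j = b - a) := fun j =>
    propext ⟨fun h => by rw [h]; ring, fun h => by rw [h]; ring⟩
  simp only [hcond, mul_ite, mul_zero]
  have hstep : ∀ k : ZMod d,
      (∑ j : ZMod d, if j = b - a then wpow d (k * m - j * n) * wpow d (-(k * b - 2⁻¹ * k * j)) else 0)
      = wpow d (k * (m - 2⁻¹ * (a + b))) * wpow d ((a - b) * n) := by
    intro k
    rw [Finset.sum_ite_eq' Finset.univ (b - a), if_pos (Finset.mem_univ _), ← wpow_add, ← wpow_add]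
    exact wpow_congr _ _ (by linear_combination (k * b) * h2)
  simp only [hstep]
  rw [← Finset.sum_mul, wpow_sum_eq]
  have hc2 : (m - 2⁻¹ * (a + b) = 0) = (a + b = 2 * m) :=
    propext ⟨fun h => by linear_combination (-2 : ZMod d) * h - (a + b) * h2,
             fun h => by linear_combination (-(2:ZMod d)⁻¹) * h - m * h2⟩
  simp only [hc2]
  split_ifs with h
  · field_simp
  · simp

lemma psSymbol_eq (h2 : (2 : ZMod d) * 2⁻¹ = 1) (U : Matrix (ZMod d) (ZMod d) ℂ) (m n : ZMod d) :
    psSymbol d U m n = ∑ j : ZMod d, wpow d (j * n) * U (m - 2⁻¹ * j) (m + 2⁻¹ * j) := by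
  have hd0 : (d : ℂ) ≠ 0 := Nat.cast_ne_zero.mpr (NeZero.ne d)
  rw [psSymbol]
  have hweyl : ∀ k j : ZMod d, weylSymbol d U k j
      = ∑ a : ZMod d, U a (a + j) * wpow d (k * (a + j) - 2⁻¹ * k * j) := by
    intro k j
    rw [weylSymbol, Matrix.trace]
    simp only [Matrix.diag_apply, Matrix.mul_apply, Dop_apply]
    refine Finset.sum_congr rfl (fun a _ => ?_)
    simp only [mul_ite, mul_zero]
    rw [Finset.sum_ite_eq' Finset.univ (a + j), if_pos (Finset.mem_univ _)]
  simp only [hweyl, Finset.sum_mul]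
  rw [Finset.sum_comm]
  have hj : ∀ j : ZMod d, (∑ k : ZMod d, ∑ a : ZMod d,
      U a (a + j) * wpow d (k * (a + j) - 2⁻¹ * k * j) * wpow d (j * n - k * m))
      = (d : ℂ) * (wpow d (j * n) * U (m - 2⁻¹ * j) (m + 2⁻¹ * j)) := by
    intro j
    rw [Finset.sum_comm]
    have h1 : ∀ a k : ZMod d, U a (a + j) * wpow d (k * (a + j) - 2⁻¹ * k * j) * wpow d (j * n - k * m)
        = U a (a + j) * wpow d (j * n) * wpow d (k * (a + 2⁻¹ * j - m)) := by
      intro a k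
      have e1 : (k * (a + j) - 2⁻¹ * k * j) + (j * n - k * m)
          = j * n + k * (a + 2⁻¹ * j - m) := by linear_combination (-(k * j)) * h2
      calc U a (a + j) * wpow d (k * (a + j) - 2⁻¹ * k * j) * wpow d (j * n - k * m)
          = U a (a + j) * wpow d ((k * (a + j) - 2⁻¹ * k * j) + (j * n - k * m)) := by
            rw [wpow_add]; ring
        _ = U a (a + j) * (wpow d (j * n) * wpow d (k * (a + 2⁻¹ * j - m))) := by
            rw [e1, wpow_add]
        _ = U a (a + j) * wpow d (j * n) * wpow d (k * (a + 2⁻¹ * j - m)) := by ring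
    simp only [h1, ← Finset.mul_sum, wpow_sum_eq]
    have hc : ∀ a : ZMod d, (a + 2⁻¹ * j - m = 0) = (a = m - 2⁻¹ * j) := fun a =>
      propext ⟨fun h => by linear_combination h, fun h => by linear_combination h⟩
    simp only [hc, mul_ite, mul_zero]
    rw [Finset.sum_ite_eq' Finset.univ (m - 2⁻¹ * j), if_pos (Finset.mem_univ _)]
    have hidx : m - 2⁻¹ * j + j = m + 2⁻¹ * j := by linear_combination (-j) * h2
    rw [hidx]; ring
  simp only [hj, ← Finset.mul_sum]
  rw [← mul_assoc]
  field_simp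

lemma trace_form (h2 : (2 : ZMod d) * 2⁻¹ = 1) (U : Matrix (ZMod d) (ZMod d) ℂ)
    (m' n' m n : ZMod d) :
    Matrix.trace (phasePoint d m' n' * U * phasePoint d m n * Uᴴ)
      = ∑ a : ZMod d, ∑ c : ZMod d,
          wpow d (2 * n' * (a - m') + 2 * n * (c - m)) *
            (U (2 * m' - a) c * (starRingEnd ℂ) (U a (2 * m - c))) := by
  rw [Matrix.trace]
  simp only [Matrix.diag_apply, Matrix.mul_apply, Matrix.conjTranspose_apply, Complex.star_def,
    phasePoint_apply h2]
  refine Finset.sum_congr rfl fun a _ => ?_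
  have hcb : ∀ b : ZMod d, (a + b = 2 * m') = (b = 2 * m' - a) := fun b =>
    propext ⟨fun h => by linear_combination h, fun h => by linear_combination h⟩
  have hcy : ∀ y x : ZMod d, (y + x = 2 * m) = (y = 2 * m - x) := fun y x =>
    propext ⟨fun h => by linear_combination h, fun h => by linear_combination h⟩
  simp only [hcb, hcy, ite_mul, zero_mul, mul_ite, mul_zero, Finset.sum_ite_eq',
    Finset.mem_univ, if_true]
  refine Fintype.sum_equiv (Equiv.subLeft (2 * m)) _ _ fun x => ?_
  simp only [Equiv.subLeft_apply]
  have h1 : 2 * m - (2 * m - x) = x := by ring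
  rw [h1, show (a - (2 * m' - a)) * n' = 2 * n' * (a - m') from by ring,
    show (2 * m - x - x) * n = 2 * n * ((2 * m - x) - m) from by ring, wpow_add]
  ring

lemma sum_nt (c0 e0 : ZMod d) (W : ℂ) :
    ∑ nt : ZMod d, wpow d (nt * c0 + e0) * W
      = (if c0 = 0 then (d : ℂ) else 0) * (wpow d e0 * W) := by
  simp only [wpow_add]
  rw [← Finset.sum_mul, ← Finset.sum_mul, wpow_sum_eq]
  ring

lemma propG_eq (h2 : (2 : ZMod d) * 2⁻¹ = 1) (U : Matrix (ZMod d) (ZMod d) ℂ)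
    (m' n' m n : ZMod d) :
    propG d U (m', n') (m, n)
      = (1 / (d : ℂ)) * ∑ a : ZMod d, ∑ c : ZMod d,
          wpow d (2 * n' * (a - m') + 2 * n * (c - m)) *
            (U (2 * m' - a) c * (starRingEnd ℂ) (U a (2 * m - c))) := by
  have hd0 : (d : ℂ) ≠ 0 := Nat.cast_ne_zero.mpr (NeZero.ne d)
  rw [propG]
  -- Step 1: expand psSymbol and reorganize into  Σ_mt Σ_j Σ_j' Σ_nt  of a single term
  have step1 : ∀ mt : ZMod d, (∑ nt : ZMod d,
      wpow d (-(2 * (mt * ((m', n').2 - (m, n).2) - nt * ((m', n').1 - (m, n).1)))) *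
        psSymbol d U ((m, n).1 + mt) ((m, n).2 + nt) *
        (starRingEnd ℂ) (psSymbol d U ((m', n').1 - mt) ((m', n').2 - nt)))
      = ∑ j : ZMod d, ∑ j' : ZMod d, ∑ nt : ZMod d,
          wpow d (nt * (2 * (m' - m) + j + j')
              + (-(2 * (mt * (n' - n))) + j * n - j' * n')) *
            (U (m + mt - 2⁻¹ * j) (m + mt + 2⁻¹ * j) *
              (starRingEnd ℂ) (U (m' - mt - 2⁻¹ * j') (m' - mt + 2⁻¹ * j'))) := by
    intro mt
    have expand : ∀ nt : ZMod d,
        wpow d (-(2 * (mt * ((m', n').2 - (m, n).2) - nt * ((m', n').1 - (m, n).1)))) *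
          psSymbol d U ((m, n).1 + mt) ((m, n).2 + nt) *
          (starRingEnd ℂ) (psSymbol d U ((m', n').1 - mt) ((m', n').2 - nt))
        = ∑ j : ZMod d, ∑ j' : ZMod d,
            wpow d (nt * (2 * (m' - m) + j + j')
                + (-(2 * (mt * (n' - n))) + j * n - j' * n')) *
              (U (m + mt - 2⁻¹ * j) (m + mt + 2⁻¹ * j) *
                (starRingEnd ℂ) (U (m' - mt - 2⁻¹ * j') (m' - mt + 2⁻¹ * j'))) := by
      intro nt
      simp only [psSymbol_eq h2, map_sum, _root_.map_mul, conj_wpow]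
      rw [mul_assoc, Finset.sum_mul_sum, Finset.mul_sum]
      refine Finset.sum_congr rfl fun j _ => ?_
      rw [Finset.mul_sum]
      refine Finset.sum_congr rfl fun j' _ => ?_
      have hE : (-(2 * (mt * (n' - n) - nt * (m' - m)))) + (j * (n + nt)) + (-(j' * (n' - nt)))
          = nt * (2 * (m' - m) + j + j')
            + (-(2 * (mt * (n' - n))) + j * n - j' * n') := by ring
      calc wpow d (-(2 * (mt * (n' - n) - nt * (m' - m)))) *
            (wpow d (j * (n + nt)) * U (m + mt - 2⁻¹ * j) (m + mt + 2⁻¹ * j) *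
              (wpow d (-(j' * (n' - nt))) *
                (starRingEnd ℂ) (U (m' - mt - 2⁻¹ * j') (m' - mt + 2⁻¹ * j'))))
          = wpow d ((-(2 * (mt * (n' - n) - nt * (m' - m)))) + (j * (n + nt)) + (-(j' * (n' - nt)))) *
              (U (m + mt - 2⁻¹ * j) (m + mt + 2⁻¹ * j) *
                (starRingEnd ℂ) (U (m' - mt - 2⁻¹ * j') (m' - mt + 2⁻¹ * j'))) := by
            rw [wpow_add, wpow_add]; ring
        _ = _ := by rw [hE, wpow_add]
    simp only [expand]
    rw [Finset.sum_comm]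
    exact Finset.sum_congr rfl fun j _ => by rw [Finset.sum_comm]
  simp only [step1, sum_nt]
  have hcj' : ∀ j j' : ZMod d, (2 * (m' - m) + j + j' = 0) = (j' = 2 * (m - m') - j) :=
    fun j j' => propext ⟨fun h => by linear_combination h, fun h => by linear_combination h⟩
  simp only [hcj', ite_mul, zero_mul, Finset.sum_ite_eq', Finset.mem_univ, if_true]
  simp only [← Finset.mul_sum]
  rw [← mul_assoc]
  congr 1
  · field_simp
  rw [← Fintype.sum_prod_type', ← Fintype.sum_prod_type']
  refine Fintype.sum_equiv
    ⟨fun p => (2 * m' - m - p.1 + 2⁻¹ * p.2, m + p.1 + 2⁻¹ * p.2),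
     fun q => (2⁻¹ * (q.2 - q.1) + m' - m, q.1 + q.2 - 2 * m'),
     fun p => ?_, fun q => ?_⟩ _ _ (fun p => ?_)
  · obtain ⟨mt, j⟩ := p
    simp only []
    refine Prod.ext ?_ ?_
    · show 2⁻¹ * ((m + mt + 2⁻¹ * j) - (2 * m' - m - mt + 2⁻¹ * j)) + m' - m = mt
      linear_combination (m - m' + mt) * h2
    · show (2 * m' - m - mt + 2⁻¹ * j) + (m + mt + 2⁻¹ * j) - 2 * m' = j
      linear_combination j * h2
  · obtain ⟨a, c⟩ := q
    simp only []
    refine Prod.ext ?_ ?_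
    · show 2 * m' - m - (2⁻¹ * (c - a) + m' - m) + 2⁻¹ * (a + c - 2 * m') = a
      linear_combination (a - m') * h2
    · show m + (2⁻¹ * (c - a) + m' - m) + 2⁻¹ * (a + c - 2 * m') = c
      linear_combination (c - m') * h2
  · obtain ⟨mt, j⟩ := p
    simp only [Equiv.coe_fn_mk]
    have hph : 2 * n' * ((2 * m' - m - mt + 2⁻¹ * j) - m') + 2 * n * ((m + mt + 2⁻¹ * j) - m)
        = -(2 * (mt * (n' - n))) + j * n - (2 * (m - m') - j) * n' := by
      linear_combination (j * (n + n')) * h2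
    have i1 : 2 * m' - (2 * m' - m - mt + 2⁻¹ * j) = m + mt - 2⁻¹ * j := by ring
    have i2 : 2 * m - (m + mt + 2⁻¹ * j) = m' - mt + 2⁻¹ * (2 * (m - m') - j) := by
      linear_combination (m' - m) * h2
    have i3 : 2 * m' - m - mt + 2⁻¹ * j = m' - mt - 2⁻¹ * (2 * (m - m') - j) := by
      linear_combination (m - m') * h2
    rw [hph, i1, i2, i3]

end aux

theorem propagator_trace_form
    (d : ℕ) [NeZero d] (hd : Nat.Prime d) (hodd : Odd d)
    (U : Matrix (ZMod d) (ZMod d) ℂ) (hU : U ∈ Matrix.unitaryGroup (ZMod d) ℂ)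
    (m' n' m n : ZMod d) :
    propG d U (m', n') (m, n) =
      (1 / (d : ℂ)) *
        Matrix.trace (phasePoint d m' n' * U * phasePoint d m n * Uᴴ) := by
  haveI : Fact (Nat.Prime d) := ⟨hd⟩
  have h20 : (2 : ZMod d) ≠ 0 := by
    have : ((2 : ℕ) : ZMod d) ≠ 0 := by
      rw [Ne, ZMod.natCast_eq_zero_iff]
      intro hdvd
      have := (Nat.prime_dvd_prime_iff_eq hd Nat.prime_two).mp hdvd
      subst this
      exact (Nat.not_odd_iff_even.mpr (even_two)) hodd
    simpa using this
  have h2 : (2 : ZMod d) * 2⁻¹ = 1 := mul_inv_cancel₀ h20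
  rw [propG_eq h2 U m' n' m n, trace_form h2 U m' n' m n]
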